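/- Monte Carlo representation of a linear recursion (Griffiths–Tavaré): Let S be a countable set with a distinguished root ρ, and suppose p : S → [0,∞) satisfies p(ρ) = 1 and p(x) = Σ_y c(x,y) p(y) for x ≠ ρ, where c(x,y) ≥ 0, each x ≠ ρ has f(x) := Σ_y c(x,y) > 0 and finitely many y with c(x,y) > 0, and every sequence x = x₀, x₁, ... with c(x_i, x_{i+1}) > 0 reaches ρ in at most N(x) steps (strictly decreasing complexity). Define the Markov chain with transitions P(x → y) = c(x,y)/f(x) for x ≠ ρ, absorbed at ρ, set f(ρ) := 1, and let τ be the absorption time. Then p(x) = E_x[Π_{i=0}^{τ-1} f(H_i)]. -/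

import Mathlib

open scoped ENNReal

section GTaux
open Classical

variable {S : Type*}

noncomputable def gtPathSum (ρ : S) (c : S → S → ℝ≥0∞) (x : S) : ℝ≥0∞ :=
  ∑' (m : ℕ), ∑' (g : Fin (m + 1) → S),
    if g 0 = x ∧ g (Fin.last m) = ρ ∧ ∀ i : Fin m, g i.castSucc ≠ ρ then
      ∏ i : Fin m, c (g i.castSucc) (g i.succ)
    else 0

lemma gtPathSum_root (ρ : S) (c : S → S → ℝ≥0∞) : gtPathSum ρ c ρ = 1 := by
  unfold gtPathSum
  have h : ∀ m : ℕ, (∑' (g : Fin (m + 1) → S),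
      if g 0 = ρ ∧ g (Fin.last m) = ρ ∧ ∀ i : Fin m, g i.castSucc ≠ ρ then
        ∏ i : Fin m, c (g i.castSucc) (g i.succ)
      else 0) = if m = 0 then 1 else 0 := by
    intro m
    match m with
    | 0 =>
      simp only [if_pos rfl]
      rw [← (Equiv.funUnique (Fin 1) S).symm.tsum_eq]
      have : ∀ s : S, ((Equiv.funUnique (Fin 1) S).symm s : Fin 1 → S) 0 = s := fun s => rfl
      calc (∑' (s : S), if ((Equiv.funUnique (Fin 1) S).symm s : Fin 1 → S) 0 = ρ ∧
              ((Equiv.funUnique (Fin 1) S).symm s : Fin 1 → S) (Fin.last 0) = ρ ∧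
              ∀ i : Fin 0, ((Equiv.funUnique (Fin 1) S).symm s : Fin 1 → S) i.castSucc ≠ ρ then
              ∏ i : Fin 0, c (((Equiv.funUnique (Fin 1) S).symm s : Fin 1 → S) i.castSucc)
                (((Equiv.funUnique (Fin 1) S).symm s : Fin 1 → S) i.succ)
            else 0)
          = ∑' (s : S), if s = ρ then 1 else 0 := by
            refine tsum_congr fun s => ?_
            simp [this, Fin.last]
        _ = 1 := tsum_ite_eq ρ 1
    | m + 1 =>
      rw [if_neg (by omega)]
      refine ENNReal.tsum_eq_zero.2 fun g => ?_
      by_cases hcond : g 0 = ρ ∧ g (Fin.last (m+1)) = ρ ∧ ∀ i : Fin (m+1), g i.castSucc ≠ ρ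
      · exact absurd hcond.1 (by simpa using hcond.2.2 0)
      · exact if_neg hcond
  calc (∑' (m : ℕ), ∑' (g : Fin (m + 1) → S),
      if g 0 = ρ ∧ g (Fin.last m) = ρ ∧ ∀ i : Fin m, g i.castSucc ≠ ρ then
        ∏ i : Fin m, c (g i.castSucc) (g i.succ) else 0)
      = ∑' (m : ℕ), if m = 0 then (1:ℝ≥0∞) else 0 := tsum_congr h
    _ = 1 := tsum_ite_eq 0 1

lemma gtPathSum_rec (ρ : S) (c : S → S → ℝ≥0∞) {x : S} (hx : x ≠ ρ) :
    gtPathSum ρ c x = ∑' y, c x y * gtPathSum ρ c y := by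
  unfold gtPathSum
  set T : ℕ → S → ℝ≥0∞ := fun m z => ∑' (g : Fin (m + 1) → S),
    if g 0 = z ∧ g (Fin.last m) = ρ ∧ ∀ i : Fin m, g i.castSucc ≠ ρ then
      ∏ i : Fin m, c (g i.castSucc) (g i.succ) else 0 with hT
  have hT0 : T 0 x = 0 := by
    refine ENNReal.tsum_eq_zero.2 fun g => ?_
    refine if_neg fun hcond => hx ?_
    have h1 : g 0 = x := hcond.1
    have h2 : g (Fin.last 0) = ρ := hcond.2.1
    rw [show (Fin.last 0) = 0 from rfl] at h2
    rw [← h1, h2]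
  have key : ∀ m : ℕ, T (m + 1) x = ∑' y, c x y * T m y := by
    intro m
    have e := (Fin.consEquiv (fun _ : Fin (m + 2) => S)).tsum_eq
      (f := fun g : Fin (m + 2) → S =>
        if g 0 = x ∧ g (Fin.last (m+1)) = ρ ∧ ∀ i : Fin (m+1), g i.castSucc ≠ ρ then
          ∏ i : Fin (m+1), c (g i.castSucc) (g i.succ) else 0)
    rw [hT]
    simp only []
    rw [← e, ENNReal.tsum_prod']
    simp only [Fin.consEquiv_apply]
    -- now sum over a : S, h : Fin (m+1) → S of F (Fin.cons a h)
    have step1 : ∀ (a : S) (h : Fin (m + 1) → S),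
        (if (Fin.cons a h : Fin (m+2) → S) 0 = x ∧
            (Fin.cons a h : Fin (m+2) → S) (Fin.last (m+1)) = ρ ∧
            ∀ i : Fin (m+1), (Fin.cons a h : Fin (m+2) → S) i.castSucc ≠ ρ then
          ∏ i : Fin (m+1), c ((Fin.cons a h : Fin (m+2) → S) i.castSucc)
            ((Fin.cons a h : Fin (m+2) → S) i.succ) else 0)
        = if a = x then
            (if h (Fin.last m) = ρ ∧ ∀ i : Fin m, h i.castSucc ≠ ρ then
              c x (h 0) * ∏ i : Fin m, c (h i.castSucc) (h i.succ) else 0)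
          else 0 := by
      intro a h
      have hlast : (Fin.cons a h : Fin (m+2) → S) (Fin.last (m+1)) = h (Fin.last m) := by
        rw [show (Fin.last (m+1)) = (Fin.last m).succ from rfl, Fin.cons_succ]
      have hforall : (∀ i : Fin (m+1), (Fin.cons a h : Fin (m+2) → S) i.castSucc ≠ ρ)
          ↔ (a ≠ ρ ∧ ∀ i : Fin m, h i.castSucc ≠ ρ) := by
        rw [Fin.forall_fin_succ]
        simp only [Fin.castSucc_zero, Fin.cons_zero, ← Fin.succ_castSucc, Fin.cons_succ]
      have hprod : (∏ i : Fin (m+1), c ((Fin.cons a h : Fin (m+2) → S) i.castSucc)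
            ((Fin.cons a h : Fin (m+2) → S) i.succ))
          = c a (h 0) * ∏ i : Fin m, c (h i.castSucc) (h i.succ) := by
        rw [Fin.prod_univ_succ]
        simp only [Fin.castSucc_zero, Fin.cons_zero, Fin.cons_succ, ← Fin.succ_castSucc]
      by_cases ha : a = x
      · subst ha
        rw [if_pos rfl]
        by_cases hc : h (Fin.last m) = ρ ∧ ∀ i : Fin m, h i.castSucc ≠ ρ
        · rw [if_pos ⟨rfl, by rw [hlast]; exact hc.1,
            hforall.2 ⟨hx, hc.2⟩⟩, if_pos hc, hprod]
        · rw [if_neg hc]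
          refine if_neg fun hcond => hc ?_
          exact ⟨by rw [← hlast]; exact hcond.2.1, (hforall.1 hcond.2.2).2⟩
      · rw [if_neg ha]
        refine if_neg fun hcond => ha ?_
        rw [← hcond.1]; simp
    calc (∑' (a : S) (h : Fin (m+1) → S),
          if (Fin.cons a h : Fin (m+2) → S) 0 = x ∧
              (Fin.cons a h : Fin (m+2) → S) (Fin.last (m+1)) = ρ ∧
              ∀ i : Fin (m+1), (Fin.cons a h : Fin (m+2) → S) i.castSucc ≠ ρ then
            ∏ i : Fin (m+1), c ((Fin.cons a h : Fin (m+2) → S) i.castSucc)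
              ((Fin.cons a h : Fin (m+2) → S) i.succ) else 0)
        = ∑' (a : S), if a = x then
            (∑' (h : Fin (m+1) → S),
              if h (Fin.last m) = ρ ∧ ∀ i : Fin m, h i.castSucc ≠ ρ then
                c x (h 0) * ∏ i : Fin m, c (h i.castSucc) (h i.succ) else 0)
          else 0 := by
          refine tsum_congr fun a => ?_
          rw [show (∑' (h : Fin (m+1) → S), _) = _ from tsum_congr fun h => step1 a h]
          by_cases ha : a = x
          · rw [if_pos ha]
            exact tsum_congr fun h => if_pos ha
          · rw [if_neg ha]
            exact ENNReal.tsum_eq_zero.2 fun h => if_neg ha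
      _ = ∑' (h : Fin (m+1) → S),
            if h (Fin.last m) = ρ ∧ ∀ i : Fin m, h i.castSucc ≠ ρ then
              c x (h 0) * ∏ i : Fin m, c (h i.castSucc) (h i.succ) else 0 :=
          tsum_ite_eq x _
      _ = ∑' (h : Fin (m+1) → S) (y : S),
            if y = h 0 then
              (if h (Fin.last m) = ρ ∧ ∀ i : Fin m, h i.castSucc ≠ ρ then
                c x (h 0) * ∏ i : Fin m, c (h i.castSucc) (h i.succ) else 0)
            else 0 := tsum_congr fun h => (tsum_ite_eq (h 0) (fun _ => (if h (Fin.last m) = ρ ∧ ∀ i : Fin m, h i.castSucc ≠ ρ then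
                c x (h 0) * ∏ i : Fin m, c (h i.castSucc) (h i.succ) else 0))).symm
      _ = ∑' (y : S) (h : Fin (m+1) → S),
            if y = h 0 then
              (if h (Fin.last m) = ρ ∧ ∀ i : Fin m, h i.castSucc ≠ ρ then
                c x (h 0) * ∏ i : Fin m, c (h i.castSucc) (h i.succ) else 0)
            else 0 := ENNReal.tsum_comm
      _ = ∑' (y : S), c x y * T m y := by
          refine tsum_congr fun y => ?_
          rw [hT, ← ENNReal.tsum_mul_left]
          refine tsum_congr fun h => ?_
          by_cases h1 : y = h 0
          · subst h1
            by_cases h2 : h (Fin.last m) = ρ ∧ ∀ i : Fin m, h i.castSucc ≠ ρ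
            · rw [if_pos rfl, if_pos h2, if_pos ⟨rfl, h2⟩]
            · rw [if_pos rfl, if_neg h2, if_neg (fun hc => h2 hc.2), mul_zero]
          · rw [if_neg h1, if_neg (fun hc => h1 hc.1.symm), mul_zero]
  calc (∑' m : ℕ, T m x)
      = T 0 x + ∑' m : ℕ, T (m + 1) x := tsum_eq_zero_add' ENNReal.summable
    _ = ∑' (m : ℕ) (y : S), c x y * T m y := by
        rw [hT0, zero_add]; exact tsum_congr key
    _ = ∑' (y : S) (m : ℕ), c x y * T m y := ENNReal.tsum_comm
    _ = ∑' y, c x y * gtPathSum ρ c y := tsum_congr fun y => ENNReal.tsum_mul_left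

end GTaux

open Classical in
/-- Monte Carlo representation of a linear recursion with nonnegative coefficients
(Griffiths–Tavaré): if `p : S → [0,∞]` satisfies `p(ρ) = 1` and
`p(x) = Σ_y c(x,y) p(y)` for `x ≠ ρ`, where each row of `c` has finite support
and finite entries, a complexity `N` strictly decreases along transitions
(`c(x,y) ≠ 0 → N(y) < N(x)`), and `f(x) := Σ_y c(x,y) > 0` for `x ≠ ρ`, then for
the Markov chain `H` with transitions `P(x → y) = c(x,y)/f(x)` absorbed at `ρ`
(absorption time `τ`), one has `p(x) = E_x[Π_{i=0}^{τ-1} f(H_i)]`; the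
expectation is written as the sum over all paths `x = g₀, …, g_m = ρ` (with
`g_i ≠ ρ` for `i < m`) of the path probability times `Π_{i<m} f(g_i)`. -/
theorem griffiths_tavare_representation {S : Type*} [Countable S]
    (ρ : S) (c : S → S → ℝ≥0∞) (p : S → ℝ≥0∞)
    (hfin : ∀ x, (Function.support (c x)).Finite)
    (hctop : ∀ x y, c x y ≠ ⊤)
    (N : S → ℕ) (hN : ∀ x y, c x y ≠ 0 → N y < N x)
    (hf : ∀ x, x ≠ ρ → 0 < ∑' y, c x y)
    (hpρ : p ρ = 1)
    (hrec : ∀ x, x ≠ ρ → p x = ∑' y, c x y * p y) :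
    ∀ x : S,
      p x = ∑' (m : ℕ), ∑' (g : Fin (m + 1) → S),
        if g 0 = x ∧ g (Fin.last m) = ρ ∧ ∀ i : Fin m, g i.castSucc ≠ ρ then
          (∏ i : Fin m, c (g i.castSucc) (g i.succ) / ∑' y, c (g i.castSucc) y) *
            ∏ i : Fin m, ∑' y, c (g i.castSucc) y
        else 0 := by
  -- each row sum is finite
  have htop : ∀ z : S, (∑' y, c z y) ≠ ⊤ := by
    intro z
    rw [tsum_eq_sum (s := (hfin z).toFinset)
      (fun y hy => by simpa [Function.mem_support] using
        (fun h => hy ((hfin z).mem_toFinset.2 h)))]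
    exact (ENNReal.sum_lt_top.2 fun y _ => (hctop z y).lt_top).ne
  -- p equals the path sum (without the division), by strong induction on N
  have main : ∀ n : ℕ, ∀ x : S, N x ≤ n → p x = gtPathSum ρ c x := by
    intro n
    induction n with
    | zero =>
      intro x hx
      by_cases hxρ : x = ρ
      · rw [hxρ, hpρ, gtPathSum_root]
      · exfalso
        have hzero : ∀ y, c x y = 0 := fun y => by
          by_contra h
          exact absurd (lt_of_lt_of_le (hN x y h) hx) (by omega)
        have := hf x hxρ
        simp [hzero] at this
    | succ n ih =>
      intro x hx
      by_cases hxρ : x = ρ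
      · rw [hxρ, hpρ, gtPathSum_root]
      · rw [hrec x hxρ, gtPathSum_rec ρ c hxρ]
        refine tsum_congr fun y => ?_
        by_cases hcy : c x y = 0
        · rw [hcy, zero_mul, zero_mul]
        · rw [ih y (by have := hN x y hcy; omega)]
  have hpx : ∀ x, p x = gtPathSum ρ c x := fun x => main (N x) x le_rfl
  intro x
  rw [hpx x]
  unfold gtPathSum
  refine tsum_congr fun m => tsum_congr fun g => ?_
  by_cases hcond : g 0 = x ∧ g (Fin.last m) = ρ ∧ ∀ i : Fin m, g i.castSucc ≠ ρ
  · rw [if_pos hcond, if_pos hcond, ← Finset.prod_mul_distrib]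
    refine Finset.prod_congr rfl fun i _ => ?_
    exact (ENNReal.div_mul_cancel ((hf _ (hcond.2.2 i)).ne') (htop _)).symm
  · rw [if_neg hcond, if_neg hcond]
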